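/- Let G be a finitely generated group such that the graded Lie algebra gr•(G/G'') ⊗ ℂ vanishes in all sufficiently large degrees. Then the I-adic filtration on the Alexander invariant H₁(G', ℂ) stabilizes, and its I-adic completion is finite-dimensional over ℂ. -/

import Mathlib

open scoped TensorProduct

/-- `H₁(G, ℂ) = G_ab ⊗ ℂ`. -/
abbrev H1c (G : Type) [Group G] : Type := ℂ ⊗[ℤ] (Additive (Abelianization G))

/-- The map `H₁(G, ℂ) → H₁(H, ℂ)` induced by a group homomorphism. -/
noncomputable def H1cMap {G H : Type} [Group G] [Group H] (f : G →* H) :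
    H1c G →ₗ[ℤ] H1c H :=
  LinearMap.lTensor ℂ ((MonoidHom.toAdditive (Abelianization.map f)).toIntLinearMap)

namespace AlexanderAux

open Subgroup Submodule
open scoped commutatorElement

variable {G : Type} [Group G]

/-- `θ c h = c ⊗ [h]` for `h` in the commutator subgroup. -/
noncomputable def theta (c : ℂ) (h : ↥(commutator G)) : H1c ↥(commutator G) :=
  c ⊗ₜ[ℤ] Additive.ofMul (Abelianization.of h)

theorem theta_mul (c : ℂ) (h₁ h₂ : ↥(commutator G)) :
    theta c (h₁ * h₂) = theta c h₁ + theta c h₂ := by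
  unfold theta
  rw [map_mul, ← TensorProduct.tmul_add]
  rfl

theorem theta_one (c : ℂ) : theta (G := G) c 1 = 0 := by
  unfold theta
  rw [map_one]
  exact TensorProduct.tmul_zero _ c

theorem theta_inv (c : ℂ) (h : ↥(commutator G)) : theta c h⁻¹ = - theta c h := by
  unfold theta
  rw [map_inv]
  exact TensorProduct.tmul_neg c _

theorem theta_pow (c : ℂ) (h : ↥(commutator G)) (m : ℕ) :
    theta c (h ^ m) = m • theta c h := by
  induction m with
  | zero => rw [pow_zero, theta_one, zero_smul]
  | succ n ih => rw [pow_succ, theta_mul, ih, succ_nsmul]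

theorem theta_nsmul (m : ℕ) (c : ℂ) (h : ↥(commutator G)) :
    m • theta c h = theta ((m : ℂ) * c) h := by
  unfold theta
  rw [← natCast_zsmul, TensorProduct.smul_tmul']
  congr 1
  rw [zsmul_eq_mul, Int.cast_natCast]

theorem lcs_le_commutator (q : ℕ) : Subgroup.lowerCentralSeries (⊤ : Subgroup G) (q + 1) ≤ commutator G := by
  have h := Subgroup.lowerCentralSeries_antitone (⊤ : Subgroup G) (Nat.succ_le_succ (Nat.zero_le q))
  exact h

/-- Image of the derived subgroup `G''` vanishes in `H₁(G', ℂ)`. -/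
theorem theta_derived (c : ℂ) (d : G) (hd : d ∈ derivedSeries G 2)
    (hd' : d ∈ commutator G) : theta c ⟨d, hd'⟩ = 0 := by
  have hset : derivedSeries G 2 =
      Subgroup.closure {g | ∃ g₁ ∈ commutator G, ∃ g₂ ∈ commutator G, ⁅g₁, g₂⁆ = g} := by
    rw [derivedSeries_succ, derivedSeries_one, Subgroup.commutator_def]
  have hle : Subgroup.closure {g | ∃ g₁ ∈ commutator G, ∃ g₂ ∈ commutator G, ⁅g₁, g₂⁆ = g}
      ≤ commutator G := by
    rw [Subgroup.closure_le]
    rintro x ⟨a, ha, b, hb, rfl⟩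
    rw [commutatorElement_def]
    exact mul_mem (mul_mem (mul_mem ha hb) (inv_mem ha)) (inv_mem hb)
  rw [hset] at hd
  induction hd using Subgroup.closure_induction with
  | mem x hx =>
    obtain ⟨a, ha, b, hb, rfl⟩ := hx
    have hx2 : (⟨⁅a, b⁆, hd'⟩ : ↥(commutator G)) =
        ⁅(⟨a, ha⟩ : ↥(commutator G)), (⟨b, hb⟩ : ↥(commutator G))⁆ := rfl
    rw [hx2]
    unfold theta
    rw [map_commutatorElement, commutatorElement_eq_one_iff_commute.mpr (Commute.all _ _),
      ofMul_one]
    exact TensorProduct.tmul_zero _ c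
  | one =>
    exact theta_one c
  | mul x y hx hy ihx ihy =>
    rw [show (⟨x * y, hd'⟩ : ↥(commutator G)) = ⟨x, hle hx⟩ * ⟨y, hle hy⟩ from rfl,
      theta_mul, ihx (hle hx), ihy (hle hy), add_zero]
  | inv x hx ihx =>
    rw [show (⟨x⁻¹, hd'⟩ : ↥(commutator G)) = (⟨x, hle hx⟩ : ↥(commutator G))⁻¹ from rfl,
      theta_inv, ihx (hle hx), neg_zero]

/-- A surjective homomorphism maps the lower central series onto the lower central series. -/
theorem lcs_map_surj {H : Type} [Group H] (f : G →* H) (hf : Function.Surjective f) :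
    ∀ n, Subgroup.map f (Subgroup.lowerCentralSeries (⊤ : Subgroup G) n) = Subgroup.lowerCentralSeries (⊤ : Subgroup H) n
  | 0 => by simpa using Subgroup.map_top_of_surjective f hf
  | n + 1 => by
    show Subgroup.map f ⁅Subgroup.lowerCentralSeries (⊤ : Subgroup G) n, ⊤⁆ = ⁅Subgroup.lowerCentralSeries (⊤ : Subgroup H) n, ⊤⁆
    rw [Subgroup.map_commutator, lcs_map_surj f hf n, Subgroup.map_top_of_surjective f hf]

section ModuleStructure

variable [Module (MonoidAlgebra ℂ (Abelianization G)) (H1c ↥(commutator G))]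

theorem single_smul_theta
    (hconj : ∀ (g : G) (y : H1c ↥(commutator G)),
      (MonoidAlgebra.single (Abelianization.of g) (1 : ℂ)) • y =
        H1cMap ((MulAut.conjNormal (H := commutator G) g).toMonoidHom) y)
    (g : G) (c : ℂ) (h : ↥(commutator G)) :
    (MonoidAlgebra.single (Abelianization.of g) (1 : ℂ)) • theta c h
      = theta c (MulAut.conjNormal (H := commutator G) g h) := by
  rw [hconj]
  unfold theta H1cMap
  rfl

theorem single_sub_one_smul_theta
    (hconj : ∀ (g : G) (y : H1c ↥(commutator G)),
      (MonoidAlgebra.single (Abelianization.of g) (1 : ℂ)) • y =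
        H1cMap ((MulAut.conjNormal (H := commutator G) g).toMonoidHom) y)
    (g : G) (c : ℂ) (h : ↥(commutator G)) (hmem : ⁅g, (h : G)⁆ ∈ commutator G) :
    (MonoidAlgebra.single (Abelianization.of g) (1 : ℂ) - 1) • theta c h
      = theta c ⟨⁅g, (h : G)⁆, hmem⟩ := by
  rw [sub_smul, one_smul, single_smul_theta hconj]
  have key : (MulAut.conjNormal (H := commutator G) g h)
      = (⟨⁅g, (h : G)⁆, hmem⟩ : ↥(commutator G)) * h := by
    apply Subtype.ext
    show ((MulAut.conjNormal (H := commutator G) g h : ↥(commutator G)) : G) = ⁅g, (h : G)⁆ * h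
    rw [MulAut.conjNormal_apply, commutatorElement_def]
    group
  rw [key, theta_mul]
  abel

/-- The generating set of the `q`-th piece of the filtration. -/
def TT (q : ℕ) : Set (H1c ↥(commutator G)) :=
  {x | ∃ (c : ℂ) (w : G) (_ : w ∈ Subgroup.lowerCentralSeries (⊤ : Subgroup G) (q + 1)) (hw' : w ∈ commutator G),
    x = theta c ⟨w, hw'⟩}

/-- The span of `TT q`. -/
noncomputable def WW (q : ℕ) : Submodule (MonoidAlgebra ℂ (Abelianization G))
    (H1c ↥(commutator G)) :=
  Submodule.span _ (TT (G := G) q)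

theorem top_le_WW_zero : (⊤ : Submodule (MonoidAlgebra ℂ (Abelianization G))
    (H1c ↥(commutator G))) ≤ WW 0 := by
  intro x hx
  clear hx
  induction x using TensorProduct.induction_on with
  | zero => exact zero_mem _
  | tmul c b =>
    apply Submodule.subset_span
    obtain ⟨y, rfl⟩ : ∃ y : Abelianization ↥(commutator G), Additive.ofMul y = b :=
      ⟨Additive.toMul b, rfl⟩
    obtain ⟨h, rfl⟩ : ∃ h : ↥(commutator G), Abelianization.of h = y := by
      refine QuotientGroup.induction_on y fun h => ⟨h, rfl⟩
    exact ⟨c, (h : G), h.2, h.2, rfl⟩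
  | add x y hx hy => exact add_mem hx hy

end ModuleStructure

theorem single_sub_one_mem (I : Ideal (MonoidAlgebra ℂ (Abelianization G)))
    (hI : I = RingHom.ker (MonoidAlgebra.lift ℂ ℂ (Abelianization G) 1))
    (a : Abelianization G) : MonoidAlgebra.single a (1 : ℂ) - 1 ∈ I := by
  rw [hI, RingHom.mem_ker, map_sub, MonoidAlgebra.lift_single]
  simp

theorem augIdeal_le_span (I : Ideal (MonoidAlgebra ℂ (Abelianization G)))
    (hI : I = RingHom.ker (MonoidAlgebra.lift ℂ ℂ (Abelianization G) 1)) :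
    I ≤ Ideal.span {x : MonoidAlgebra ℂ (Abelianization G) |
      ∃ a, x = MonoidAlgebra.single a (1 : ℂ) - 1} := by
  intro r hr
  rw [hI, RingHom.mem_ker] at hr
  have key : ∀ r : MonoidAlgebra ℂ (Abelianization G),
      r - MonoidAlgebra.single 1 ((MonoidAlgebra.lift ℂ ℂ (Abelianization G) 1) r) ∈
        Ideal.span {x : MonoidAlgebra ℂ (Abelianization G) |
          ∃ a, x = MonoidAlgebra.single a (1 : ℂ) - 1} := by
    intro r
    refine MonoidAlgebra.induction_linear (motive := fun r : MonoidAlgebra ℂ (Abelianization G) =>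
      r - MonoidAlgebra.single 1 ((MonoidAlgebra.lift ℂ ℂ (Abelianization G) 1) r) ∈
        Ideal.span {x : MonoidAlgebra ℂ (Abelianization G) |
          ∃ a, x = MonoidAlgebra.single a (1 : ℂ) - 1}) r ?_ ?_ ?_
    · simpa using zero_mem _
    · intro f g hf hg
      rw [map_add, MonoidAlgebra.single_add]
      have h2 := add_mem hf hg
      rw [sub_add_sub_comm] at h2
      exact h2
    · intro a b
      have h1 : ((MonoidAlgebra.lift ℂ ℂ (Abelianization G) 1) (MonoidAlgebra.single a b)) = b := by
        rw [MonoidAlgebra.lift_single]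
        simp
      rw [h1]
      have h2 : (MonoidAlgebra.single a b - MonoidAlgebra.single 1 b :
          MonoidAlgebra ℂ (Abelianization G)) = MonoidAlgebra.single 1 b *
            (MonoidAlgebra.single a (1 : ℂ) - 1) := by
        rw [mul_sub, MonoidAlgebra.single_mul_single, one_mul, mul_one, mul_one]
      rw [h2]
      exact Ideal.mul_mem_left _ _ (Ideal.subset_span ⟨a, rfl⟩)
  have h3 := key r
  rw [hr] at h3
  simpa using h3


open scoped Pointwise in
/-- Modulo `I ^ K`, the monoid algebra is spanned over `ℂ` by finitely many monomials. -/
theorem aug_pow_cofinite (hfg : Group.FG (Abelianization G))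
    (I : Ideal (MonoidAlgebra ℂ (Abelianization G)))
    (hI : I = RingHom.ker (MonoidAlgebra.lift ℂ ℂ (Abelianization G) 1))
    (K : ℕ) (hK : 2 ≤ K) :
    ∃ Mon : Set (MonoidAlgebra ℂ (Abelianization G)), Mon.Finite ∧
      ∀ r : MonoidAlgebra ℂ (Abelianization G),
        r ∈ Submodule.span ℂ Mon ⊔ (I ^ K).restrictScalars ℂ := by
  classical
  obtain ⟨S, hSgen⟩ := hfg.out
  have hTfin : ((↑S : Set (Abelianization G)) ∪ (↑S : Set (Abelianization G))⁻¹).Finite :=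
    S.finite_toSet.union S.finite_toSet.inv
  set F : Set (MonoidAlgebra ℂ (Abelianization G)) :=
    (fun a => MonoidAlgebra.single a (1 : ℂ) - 1) ''
      ((↑S : Set (Abelianization G)) ∪ (↑S : Set (Abelianization G))⁻¹) with hF
  have hFfin : F.Finite := hTfin.image _
  haveI : Finite ↥F := hFfin.to_subtype
  set Mon : Set (MonoidAlgebra ℂ (Abelianization G)) :=
    (fun l : List ↥F => (l.map Subtype.val).prod) '' {l | l.length < K} with hMon
  have hMonFin : Mon.Finite := Set.Finite.image _ (List.finite_length_lt ↥F K)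
  refine ⟨Mon, hMonFin, ?_⟩
  have hFI : ∀ f ∈ F, f ∈ I := by
    rintro f ⟨a, -, rfl⟩
    exact single_sub_one_mem I hI a
  have hlist : ∀ l : List (MonoidAlgebra ℂ (Abelianization G)), (∀ y ∈ l, y ∈ I) →
      l.prod ∈ I ^ l.length := by
    intro l
    induction l with
    | nil =>
      intro _
      rw [List.prod_nil, List.length_nil, pow_zero, Ideal.one_eq_top]
      trivial
    | cons a l ih =>
      intro h
      rw [List.prod_cons, List.length_cons, pow_succ']
      exact Ideal.mul_mem_mul (h a (List.mem_cons_self))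
        (ih fun y hy => h y (List.mem_cons_of_mem a hy))
  have hone : (1 : MonoidAlgebra ℂ (Abelianization G)) ∈ Mon := by
    refine ⟨[], ?_, by simp⟩
    simp only [Set.mem_setOf_eq, List.length_nil]
    omega
  have hmul : ∀ x ∈ Submodule.span ℂ Mon, ∀ y ∈ Submodule.span ℂ Mon,
      x * y ∈ Submodule.span ℂ Mon ⊔ (I ^ K).restrictScalars ℂ := by
    have h1 : Submodule.span ℂ Mon * Submodule.span ℂ Mon ≤
        Submodule.span ℂ Mon ⊔ (I ^ K).restrictScalars ℂ := by
      rw [Submodule.span_mul_span]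
      refine Submodule.span_le.mpr ?_
      rintro z ⟨x, ⟨l1, hl1, rfl⟩, y, ⟨l2, hl2, rfl⟩, rfl⟩
      by_cases hlen : (l1 ++ l2).length < K
      · apply Submodule.mem_sup_left
        refine Submodule.subset_span ⟨l1 ++ l2, hlen, ?_⟩
        show (List.map Subtype.val (l1 ++ l2)).prod = _
        rw [List.map_append, List.prod_append]
      · apply Submodule.mem_sup_right
        show _ ∈ I ^ K
        have h2 : ((l1 ++ l2).map Subtype.val).prod ∈ I ^ ((l1 ++ l2).map Subtype.val).length := by
          refine hlist _ ?_
          intro y hy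
          obtain ⟨⟨y', hy'⟩, -, rfl⟩ := List.mem_map.mp hy
          exact hFI _ hy'
        have h3 : I ^ (((l1 ++ l2).map Subtype.val).length) ≤ I ^ K :=
          Ideal.pow_le_pow_right (by rw [List.length_map]; omega)
        have h4 := h3 h2
        rw [List.map_append, List.prod_append] at h4
        exact h4
    intro x hx y hy
    exact h1 (Submodule.mul_mem_mul hx hy)
  have hWmul : ∀ x ∈ Submodule.span ℂ Mon ⊔ (I ^ K).restrictScalars ℂ,
      ∀ y ∈ Submodule.span ℂ Mon ⊔ (I ^ K).restrictScalars ℂ,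
      x * y ∈ Submodule.span ℂ Mon ⊔ (I ^ K).restrictScalars ℂ := by
    intro x hx y hy
    obtain ⟨v, hv, j, hj, rfl⟩ := Submodule.mem_sup.mp hx
    obtain ⟨v', hv', j', hj', rfl⟩ := Submodule.mem_sup.mp hy
    have hj2 : j ∈ I ^ K := hj
    have hj2' : j' ∈ I ^ K := hj'
    have hexp : (v + j) * (v' + j') = v * v' + (v * j' + (j * v' + j * j')) := by ring
    rw [hexp]
    refine add_mem (hmul v hv v' hv') (Submodule.mem_sup_right ?_)
    show _ ∈ I ^ K
    exact add_mem (Ideal.mul_mem_left _ _ hj2')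
      (add_mem (Ideal.mul_mem_right _ _ hj2) (Ideal.mul_mem_right _ _ hj2))
  have hsingle : ∀ a : Abelianization G, MonoidAlgebra.single a (1 : ℂ) ∈
      Submodule.span ℂ Mon ⊔ (I ^ K).restrictScalars ℂ := by
    intro a
    have ha : a ∈ Submonoid.closure
        ((↑S : Set (Abelianization G)) ∪ (↑S : Set (Abelianization G))⁻¹) := by
      have h5 : a ∈ ((⊤ : Subgroup (Abelianization G)) : Set (Abelianization G)) := trivial
      rw [← hSgen] at h5
      rw [← Subgroup.closure_toSubmonoid]
      exact h5
    induction ha using Submonoid.closure_induction with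
    | mem t ht =>
      have h1 : MonoidAlgebra.single t (1 : ℂ) - 1 ∈ Mon := by
        refine ⟨[⟨_, ⟨t, ht, rfl⟩⟩], ?_, by simp⟩
        simp only [Set.mem_setOf_eq, List.length_cons, List.length_nil]
        omega
      have h2 : MonoidAlgebra.single t (1 : ℂ) = 1 + (MonoidAlgebra.single t (1 : ℂ) - 1) := by
        ring
      rw [h2]
      exact add_mem (Submodule.mem_sup_left (Submodule.subset_span hone))
        (Submodule.mem_sup_left (Submodule.subset_span h1))
    | one =>
      rw [← MonoidAlgebra.one_def]
      exact Submodule.mem_sup_left (Submodule.subset_span hone)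
    | mul x y hx hy ihx ihy =>
      have h3 : MonoidAlgebra.single (x * y) (1 : ℂ)
          = MonoidAlgebra.single x (1 : ℂ) * MonoidAlgebra.single y (1 : ℂ) := by
        rw [MonoidAlgebra.single_mul_single, mul_one]
      rw [h3]
      exact hWmul _ ihx _ ihy
  intro r
  refine MonoidAlgebra.induction_linear (motive := fun r : MonoidAlgebra ℂ (Abelianization G) =>
    r ∈ Submodule.span ℂ Mon ⊔ (I ^ K).restrictScalars ℂ) r ?_ ?_ ?_
  · exact zero_mem _
  · intro f g hf hg
    exact add_mem hf hg
  · intro a b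
    have h4 : (MonoidAlgebra.single a b : MonoidAlgebra ℂ (Abelianization G))
        = b • MonoidAlgebra.single a (1 : ℂ) := by
      rw [MonoidAlgebra.smul_single', mul_one]
    show (MonoidAlgebra.single a b : MonoidAlgebra ℂ (Abelianization G)) ∈ _
    rw [h4]
    exact Submodule.smul_mem _ b (hsingle a)

section Filtration

variable [Module (MonoidAlgebra ℂ (Abelianization G)) (H1c ↥(commutator G))]
variable (hconj : ∀ (g : G) (y : H1c ↥(commutator G)),
      (MonoidAlgebra.single (Abelianization.of g) (1 : ℂ)) • y =
        H1cMap ((MulAut.conjNormal (H := commutator G) g).toMonoidHom) y)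
variable (I : Ideal (MonoidAlgebra ℂ (Abelianization G)))
variable (hI : I = RingHom.ker (MonoidAlgebra.lift ℂ ℂ (Abelianization G) 1))

theorem pow_succ_smul_top :
    ∀ q : ℕ, (I ^ (q + 1) • ⊤ : Submodule (MonoidAlgebra ℂ (Abelianization G))
        (H1c ↥(commutator G))) = I • (I ^ q • ⊤) := by
  intro q
  rw [pow_succ', ← Ideal.smul_eq_mul, Submodule.smul_assoc]

include hconj hI in
theorem TT_le_pow : ∀ q : ℕ, TT (G := G) q ⊆
    ((I ^ q • ⊤ : Submodule (MonoidAlgebra ℂ (Abelianization G)) (H1c ↥(commutator G))) :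
      Set (H1c ↥(commutator G))) := by
  intro q
  induction q with
  | zero =>
    intro x _
    rw [pow_zero, Ideal.one_eq_top, Submodule.top_smul]
    trivial
  | succ q ih =>
    have hcl : Subgroup.closure {x | ∃ p ∈ Subgroup.lowerCentralSeries (⊤ : Subgroup G) (q + 1),
        ∃ u ∈ (⊤ : Subgroup G), p * u * p⁻¹ * u⁻¹ = x} ≤ commutator G := by
      exact lcs_le_commutator (q + 1)
    have main : ∀ w, w ∈ Subgroup.closure {x | ∃ p ∈ Subgroup.lowerCentralSeries (⊤ : Subgroup G) (q + 1),
        ∃ u ∈ (⊤ : Subgroup G), p * u * p⁻¹ * u⁻¹ = x} →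
        ∀ (hw' : w ∈ commutator G) (c : ℂ), theta c ⟨w, hw'⟩ ∈
          (I ^ (q + 1) • ⊤ : Submodule (MonoidAlgebra ℂ (Abelianization G))
            (H1c ↥(commutator G))) := by
      intro w hw
      induction hw using Subgroup.closure_induction with
      | mem x hx =>
        intro hw' c
        obtain ⟨p, hp, u, -, rfl⟩ := hx
        have hp' : p ∈ commutator G := lcs_le_commutator q hp
        have hm : ⁅u, p⁆ ∈ commutator G :=
          Subgroup.commutator_mem_commutator (Subgroup.mem_top u) (Subgroup.mem_top p)
        have hxe : (⟨p * u * p⁻¹ * u⁻¹, hw'⟩ : ↥(commutator G)) =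
            (⟨⁅u, p⁆, hm⟩ : ↥(commutator G))⁻¹ := by
          apply Subtype.ext
          show p * u * p⁻¹ * u⁻¹ = ⁅u, p⁆⁻¹
          rw [commutatorElement_def]
          group
        rw [hxe, theta_inv]
        apply neg_mem
        have hth : theta c ⟨p, hp'⟩ ∈
            (I ^ q • ⊤ : Submodule (MonoidAlgebra ℂ (Abelianization G)) (H1c ↥(commutator G))) :=
          ih ⟨c, p, hp, hp', rfl⟩
        have heq := single_sub_one_smul_theta hconj u c ⟨p, hp'⟩ hm
        rw [← heq, pow_succ_smul_top]
        exact Submodule.smul_mem_smul (single_sub_one_mem I hI _) hth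
      | one =>
        intro hw' c
        rw [show (⟨1, hw'⟩ : ↥(commutator G)) = 1 from rfl, theta_one]
        exact zero_mem _
      | mul x y hx hy ihx ihy =>
        intro hw' c
        rw [show (⟨x * y, hw'⟩ : ↥(commutator G)) = ⟨x, hcl hx⟩ * ⟨y, hcl hy⟩ from rfl, theta_mul]
        exact add_mem (ihx (hcl hx) c) (ihy (hcl hy) c)
      | inv x hx ihx =>
        intro hw' c
        rw [show (⟨x⁻¹, hw'⟩ : ↥(commutator G)) = (⟨x, hcl hx⟩ : ↥(commutator G))⁻¹ from rfl,
          theta_inv]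
        exact neg_mem (ihx (hcl hx) c)
    rintro x ⟨c, w, hw, hw', rfl⟩
    exact main w hw hw' c

include hconj hI in
theorem pow_le_WW : ∀ q : ℕ,
    (I ^ q • ⊤ : Submodule (MonoidAlgebra ℂ (Abelianization G)) (H1c ↥(commutator G)))
      ≤ WW q := by
  intro q
  induction q with
  | zero => exact le_trans (by rw [pow_zero, Ideal.one_eq_top, Submodule.top_smul]) top_le_WW_zero
  | succ q ih =>
    rw [pow_succ_smul_top]
    refine le_trans (Submodule.smul_mono le_rfl ih) ?_
    rw [Submodule.smul_le]
    intro r hr x hx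
    have hr' := augIdeal_le_span I hI hr
    clear hr
    induction hr' using Submodule.span_induction with
    | mem s hs =>
      obtain ⟨a, rfl⟩ := hs
      obtain ⟨g, rfl⟩ : ∃ g : G, Abelianization.of g = a := by
        refine QuotientGroup.induction_on a fun g => ⟨g, rfl⟩
      have himg := Submodule.apply_mem_span_image_of_mem_span
        (LinearMap.lsmul (MonoidAlgebra ℂ (Abelianization G)) (H1c ↥(commutator G))
          (MonoidAlgebra.single (Abelianization.of g) (1 : ℂ) - 1)) hx
      refine Submodule.span_le.mpr ?_ himg
      rintro z ⟨t, ⟨c, w, hw, hw', rfl⟩, rfl⟩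
      have hm2 : ⁅g, w⁆ ∈ Subgroup.lowerCentralSeries (⊤ : Subgroup G) (q + 2) := by
        have h1 : ⁅w, g⁆ ∈ Subgroup.lowerCentralSeries (⊤ : Subgroup G) (q + 2) :=
          Subgroup.commutator_mem_commutator hw (Subgroup.mem_top g)
        rw [← commutatorElement_inv]
        exact inv_mem h1
      have hm2' : ⁅g, w⁆ ∈ commutator G :=
        Subgroup.commutator_mem_commutator (Subgroup.mem_top g) (Subgroup.mem_top w)
      apply Submodule.subset_span
      refine ⟨c, ⁅g, w⁆, hm2, hm2', ?_⟩
      show (MonoidAlgebra.single (Abelianization.of g) (1 : ℂ) - 1) • theta c ⟨w, hw'⟩ = _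
      rw [single_sub_one_smul_theta hconj g c ⟨w, hw'⟩ hm2']
    | zero => rw [zero_smul]; exact zero_mem _
    | add r s _ _ ihr ihs => rw [add_smul]; exact add_mem ihr ihs
    | smul a r _ ihr =>
      rw [smul_eq_mul, mul_smul]
      exact Submodule.smul_mem _ a ihr

include hconj hI in
theorem WW_le_pow (q : ℕ) : WW q ≤
    (I ^ q • ⊤ : Submodule (MonoidAlgebra ℂ (Abelianization G)) (H1c ↥(commutator G))) :=
  Submodule.span_le.mpr (TT_le_pow hconj I hI q)

theorem WW_step [h2 : (derivedSeries G 2).Normal] (q : ℕ)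
    (hq : ∀ x ∈ Subgroup.lowerCentralSeries (⊤ : Subgroup (G ⧸ derivedSeries G 2)) (q + 1),
      ∃ m : ℕ, 0 < m ∧ x ^ m ∈ Subgroup.lowerCentralSeries (⊤ : Subgroup (G ⧸ derivedSeries G 2)) (q + 2)) :
    WW (G := G) q ≤ WW (q + 1) := by
  refine Submodule.span_le.mpr ?_
  rintro x ⟨c, w, hw, hw', rfl⟩
  set π := QuotientGroup.mk' (derivedSeries G 2) with hπ
  have hπw : π w ∈ Subgroup.lowerCentralSeries (⊤ : Subgroup (G ⧸ derivedSeries G 2)) (q + 1) :=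
    Subgroup.lowerCentralSeries.map π (q + 1) ⟨w, hw, rfl⟩
  obtain ⟨m, hm, hpow⟩ := hq (π w) hπw
  have hsurj : Function.Surjective π := QuotientGroup.mk'_surjective _
  have hmem : π (w ^ m) ∈ Subgroup.map π (Subgroup.lowerCentralSeries (⊤ : Subgroup G) (q + 2)) := by
    rw [lcs_map_surj π hsurj (q + 2), map_pow]
    exact hpow
  obtain ⟨u, hu, hup⟩ := hmem
  have hd : u⁻¹ * w ^ m ∈ derivedSeries G 2 := by
    have h1 : π (u⁻¹ * w ^ m) = 1 := by
      rw [map_mul, map_inv, hup]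
      group
    rw [← QuotientGroup.ker_mk' (derivedSeries G 2)]
    exact h1
  have hu' : u ∈ commutator G := lcs_le_commutator (q + 1) hu
  have hwm : w ^ m ∈ commutator G := pow_mem hw' m
  have hd' : u⁻¹ * w ^ m ∈ commutator G := mul_mem (inv_mem hu') hwm
  have hmC : ((m : ℂ)) ≠ 0 := Nat.cast_ne_zero.mpr hm.ne'
  have h1 : theta c ⟨w, hw'⟩ = theta ((m : ℂ)⁻¹ * c) ⟨u, hu'⟩ := by
    have h2 : theta c ⟨w, hw'⟩ = m • theta ((m : ℂ)⁻¹ * c) ⟨w, hw'⟩ := by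
      rw [theta_nsmul]
      congr 1
      field_simp
    rw [h2, ← theta_pow]
    have h3 : (⟨w, hw'⟩ : ↥(commutator G)) ^ m = ⟨w ^ m, hwm⟩ := by
      apply Subtype.ext
      simp
    rw [h3]
    have h4 : (⟨w ^ m, hwm⟩ : ↥(commutator G)) = ⟨u, hu'⟩ * ⟨u⁻¹ * w ^ m, hd'⟩ := by
      apply Subtype.ext
      show w ^ m = u * (u⁻¹ * w ^ m)
      group
    rw [h4, theta_mul, theta_derived _ _ hd hd', add_zero]
  rw [h1]
  exact Submodule.subset_span ⟨(m : ℂ)⁻¹ * c, u, hu, hu', rfl⟩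

end Filtration

end AlexanderAux

set_option maxHeartbeats 2000000

/-- Let `G` be a finitely generated group such that
`gr•(G/G'') ⊗ ℂ` vanishes in all sufficiently large degrees (each quotient of
consecutive terms of the lower central series of `G/G''` is eventually torsion).
Then the `I`-adic filtration on the Alexander invariant `H₁(G',ℂ)` (a module over
`ℂ[G_ab]` via conjugation, `I` the augmentation ideal) stabilizes, and the `I`-adic
completion of `H₁(G',ℂ)` is finite-dimensional over `ℂ`. -/
theorem alexander_invariant_completion_finite
    (G : Type) [Group G] (hGfg : Group.FG G)
    [h2 : (derivedSeries G 2).Normal]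
    -- `gr_q(G/G'') ⊗ ℂ = 0` for all large `q`
    (hgr : ∃ N : ℕ, ∀ q ≥ N, ∀ x ∈ Subgroup.lowerCentralSeries (⊤ : Subgroup (G ⧸ derivedSeries G 2)) q,
      ∃ m : ℕ, 0 < m ∧ x ^ m ∈ Subgroup.lowerCentralSeries (⊤ : Subgroup (G ⧸ derivedSeries G 2)) (q + 1))
    -- the augmentation ideal `I ⊆ ℂ[G_ab]`
    (I : Ideal (MonoidAlgebra ℂ (Abelianization G)))
    (hI : I = RingHom.ker (MonoidAlgebra.lift ℂ ℂ (Abelianization G) 1))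
    -- the conjugation `ℂ[G_ab]`-module structure on `H₁(G',ℂ) = (G'/G'') ⊗ ℂ`
    (instM : Module (MonoidAlgebra ℂ (Abelianization G)) (H1c ↥(commutator G)))
    (hconj : ∀ (g : G) (y : H1c ↥(commutator G)),
      (MonoidAlgebra.single (Abelianization.of g) (1 : ℂ)) • y =
        H1cMap ((MulAut.conjNormal (H := commutator G) g).toMonoidHom) y)
    (hfin : Module.Finite (MonoidAlgebra ℂ (Abelianization G)) (H1c ↥(commutator G))) :
    -- the `I`-adic filtration stabilizes …
    (∃ k : ℕ, ∀ j ≥ k,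
      (I ^ j • ⊤ : Submodule (MonoidAlgebra ℂ (Abelianization G)) (H1c ↥(commutator G)))
        = I ^ k • ⊤) ∧
    -- … and the `I`-adic completion is finite-dimensional over `ℂ`
    (letI : Module ℂ (AdicCompletion I (H1c ↥(commutator G))) :=
      Module.compHom _ (algebraMap ℂ (MonoidAlgebra ℂ (Abelianization G)))
     FiniteDimensional ℂ (AdicCompletion I (H1c ↥(commutator G)))) := by
  classical
  obtain ⟨N, hN⟩ := hgr
  -- Part 1: stabilization at `k = N`.
  have part1 : ∀ j, N ≤ j →
      (I ^ j • ⊤ : Submodule (MonoidAlgebra ℂ (Abelianization G)) (H1c ↥(commutator G)))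
        = I ^ N • ⊤ := by
    intro j hj
    induction j, hj using Nat.le_induction with
    | base => rfl
    | succ n hn ih =>
      rw [← ih]
      apply le_antisymm
      · exact Submodule.smul_mono_left (Ideal.pow_le_pow_right (Nat.le_succ n))
      · refine le_trans (AlexanderAux.pow_le_WW hconj I hI n) ?_
        refine le_trans (AlexanderAux.WW_step n (hN (n + 1) (by omega))) ?_
        exact AlexanderAux.WW_le_pow hconj I hI (n + 1)
  refine ⟨⟨N, part1⟩, ?_⟩
  -- Part 2: the adic completion is finite-dimensional over `ℂ`.
  -- Injectivity of evaluation at level `N` on the completion.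
  have hinj : Function.Injective (AdicCompletion.eval I (H1c ↥(commutator G)) N) := by
    have hzero : ∀ x : AdicCompletion I (H1c ↥(commutator G)),
        AdicCompletion.eval I (H1c ↥(commutator G)) N x = 0 → x = 0 := by
      intro x hx
      apply Subtype.ext
      funext n
      show x.val n = 0
      rcases le_total n N with h | h
      · have h1 := x.property h
        have hxN : x.val N = 0 := hx
        rw [← h1, hxN, map_zero]
      · obtain ⟨y, hy⟩ := Submodule.Quotient.mk_surjective _ (x.val n)
        have h2 := x.property h
        rw [← hy] at h2
        have hxN : x.val N = 0 := hx
        rw [hxN] at h2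
        have h3 : y ∈ (I ^ N • ⊤ : Submodule (MonoidAlgebra ℂ (Abelianization G))
            (H1c ↥(commutator G))) := (Submodule.Quotient.mk_eq_zero _).mp h2
        rw [← hy]
        refine (Submodule.Quotient.mk_eq_zero _).mpr ?_
        rw [part1 n h]
        exact h3
    intro a b hab
    have h4 := hzero (a - b) (by rw [map_sub, hab, sub_self])
    exact sub_eq_zero.mp h4
  -- Finite generation data.
  have hofsurj : Function.Surjective (Abelianization.of (G := G)) := fun b =>
    QuotientGroup.induction_on b fun g => ⟨g, rfl⟩
  haveI hGfgI : Group.FG G := hGfg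
  haveI hAfg : Group.FG (Abelianization G) := Group.fg_of_surjective hofsurj
  obtain ⟨Mon, hMonFin, hMonSpan⟩ :=
    AlexanderAux.aug_pow_cofinite hAfg I hI (N + 2) (by omega)
  obtain ⟨gS, hgSfin, hgSspan⟩ := Submodule.fg_def.mp (Module.finite_def.mp hfin)
  -- The `ℂ`-module structure on the quotient.
  letI instQ : Module ℂ ((H1c ↥(commutator G)) ⧸
      (I ^ N • ⊤ : Submodule (MonoidAlgebra ℂ (Abelianization G)) (H1c ↥(commutator G)))) :=
    Module.compHom _ (algebraMap ℂ (MonoidAlgebra ℂ (Abelianization G)))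
  have hCsmul : ∀ (c : ℂ) (y : (H1c ↥(commutator G)) ⧸
      (I ^ N • ⊤ : Submodule (MonoidAlgebra ℂ (Abelianization G)) (H1c ↥(commutator G)))),
      c • y = (algebraMap ℂ (MonoidAlgebra ℂ (Abelianization G)) c) • y := fun _ _ => rfl
  have hP : ∀ y ∈ Submodule.span (MonoidAlgebra ℂ (Abelianization G)) gS,
      ∀ r : MonoidAlgebra ℂ (Abelianization G),
        Submodule.mkQ (I ^ N • ⊤ : Submodule (MonoidAlgebra ℂ (Abelianization G))
          (H1c ↥(commutator G))) (r • y) ∈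
        Submodule.span ℂ (Set.image2 (fun (v : MonoidAlgebra ℂ (Abelianization G))
          (s : H1c ↥(commutator G)) =>
            Submodule.mkQ (I ^ N • ⊤ : Submodule (MonoidAlgebra ℂ (Abelianization G))
              (H1c ↥(commutator G))) (v • s)) Mon gS) := by
    intro y hy
    induction hy using Submodule.span_induction with
    | mem s hs =>
      intro r
      obtain ⟨v, hv, j, hj, rfl⟩ := Submodule.mem_sup.mp (hMonSpan r)
      rw [add_smul, map_add]
      refine add_mem ?_ ?_
      · clear hj
        induction hv using Submodule.span_induction with
        | mem w hw => exact Submodule.subset_span (Set.mem_image2_of_mem hw hs)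
        | zero => rw [zero_smul, map_zero]; exact zero_mem _
        | add x y hx hy ihx ihy => rw [add_smul, map_add]; exact add_mem ihx ihy
        | smul c x hx ihx =>
          have h5 : ((c • x : MonoidAlgebra ℂ (Abelianization G))) • s
              = (algebraMap ℂ (MonoidAlgebra ℂ (Abelianization G)) c) • (x • s) := by
            rw [Algebra.smul_def, mul_smul]
          rw [h5, map_smul, ← hCsmul]
          exact Submodule.smul_mem _ c ihx
      · have h6 : j • s ∈ (I ^ N • ⊤ : Submodule (MonoidAlgebra ℂ (Abelianization G))
            (H1c ↥(commutator G))) := by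
          have hj2 : j ∈ I ^ (N + 2) := hj
          exact Submodule.smul_mem_smul (Ideal.pow_le_pow_right (by omega) hj2) trivial
        have h7 : Submodule.mkQ (I ^ N • ⊤ : Submodule (MonoidAlgebra ℂ (Abelianization G))
            (H1c ↥(commutator G))) (j • s) = 0 := by
          rw [Submodule.mkQ_apply]
          exact (Submodule.Quotient.mk_eq_zero _).mpr h6
        rw [h7]
        exact zero_mem _
    | zero => intro r; rw [smul_zero, map_zero]; exact zero_mem _
    | add y z hy hz ihy ihz => intro r; rw [smul_add, map_add]; exact add_mem (ihy r) (ihz r)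
    | smul a y hy ihy => intro r; rw [smul_smul]; exact ihy (r * a)
  haveI hQfin : FiniteDimensional ℂ ((H1c ↥(commutator G)) ⧸
      (I ^ N • ⊤ : Submodule (MonoidAlgebra ℂ (Abelianization G)) (H1c ↥(commutator G)))) := by
    refine Module.finite_def.mpr (Submodule.fg_def.mpr
      ⟨Set.image2 (fun (v : MonoidAlgebra ℂ (Abelianization G)) (s : H1c ↥(commutator G)) =>
          Submodule.mkQ (I ^ N • ⊤ : Submodule (MonoidAlgebra ℂ (Abelianization G))
            (H1c ↥(commutator G))) (v • s)) Mon gS,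
        Set.Finite.image2 _ hMonFin hgSfin, ?_⟩)
    rw [eq_top_iff]
    intro y _
    obtain ⟨x, rfl⟩ := Submodule.Quotient.mk_surjective _ y
    have hx : x ∈ Submodule.span (MonoidAlgebra ℂ (Abelianization G)) gS := by
      rw [hgSspan]; trivial
    have h8 := hP x hx 1
    rw [one_smul] at h8
    exact h8
  letI instC : Module ℂ (AdicCompletion I (H1c ↥(commutator G))) :=
    Module.compHom _ (algebraMap ℂ (MonoidAlgebra ℂ (Abelianization G)))
  exact FiniteDimensional.of_injective
    (⟨⟨fun x => AdicCompletion.eval I (H1c ↥(commutator G)) N x, fun a b => map_add _ a b⟩,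
      fun c x => map_smul (AdicCompletion.eval I (H1c ↥(commutator G)) N)
        (algebraMap ℂ (MonoidAlgebra ℂ (Abelianization G)) c) x⟩) hinj
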